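/- (One-step estimator bound, L-SVRG.) Let x ∈ ℝ^d and ỹ ∈ ℝ^d, and set ḡ = (1/n) ∑_{j=1}^n ∇f_j(ỹ) = ∇f(ỹ). Then (1/n) ∑_{i=1}^n ‖∇f_i(x) − ∇f_i(ỹ) + ḡ‖² ≤ 8L (f(x) − f(x*)) + 4L ( ∑_{i=1}^n D_{f_i}(ỹ, x*) − [ (1/n) ∑_{i=1}^n D_{f_i}(x, x*) + ((n−1)/n) ∑_{i=1}^n D_{f_i}(ỹ, x*) ] ), where the bracketed term is the expectation of ∑_{i=1}^n D_{f_i}(ỹ', x*) when the updated anchor ỹ' equals x with probability p = 1/n and equals ỹ with probability 1 − 1/n. -/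

import Mathlib

/-- Bregman divergence `D_g(y, x) = g(y) − g(x) − ⟨∇g(x), y − x⟩`. -/
noncomputable def bregDiv {d : ℕ} (g : EuclideanSpace ℝ (Fin d) → ℝ)
    (y x : EuclideanSpace ℝ (Fin d)) : ℝ :=
  g y - g x - @inner ℝ _ _ (gradient g x) (y - x)

variable {d : ℕ}

local notation "E" => EuclideanSpace ℝ (Fin d)

lemma hasDerivAt_line (g : E → ℝ) (hg : Differentiable ℝ g) (x v : E) (t : ℝ) :
    HasDerivAt (fun s : ℝ => g (x + s • v))
      (@inner ℝ _ _ (gradient g (x + t • v)) v) t := by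
  have h1 : HasDerivAt (fun s : ℝ => x + s • v) v t := by
    simpa using ((hasDerivAt_id t).smul_const v).const_add x
  have h2 : HasFDerivAt g (InnerProductSpace.toDual ℝ _ (gradient g (x + t • v))) (x + t • v) :=
    ((hg (x + t • v)).hasGradientAt).hasFDerivAt
  have := h2.comp_hasDerivAt t h1
  simpa [InnerProductSpace.toDual_apply_apply, Function.comp_def] using this

lemma convex_lower (g : E → ℝ) (hc : ConvexOn ℝ Set.univ g) (hg : Differentiable ℝ g)
    (x z : E) : g x + @inner ℝ _ _ (gradient g x) (z - x) ≤ g z := by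
  have hφ : ConvexOn ℝ Set.univ (fun t : ℝ => g (x + t • (z - x))) := by
    have h := hc.comp_affineMap (AffineMap.lineMap x z)
    have : (fun t : ℝ => g (x + t • (z - x))) = (g ∘ AffineMap.lineMap x z) := by
      funext t
      simp [AffineMap.lineMap_apply, add_comm]
    rw [this]
    simpa using h
  have hd := hasDerivAt_line g hg x (z - x) 0
  simp only [zero_smul, add_zero] at hd
  have hslope := hφ.le_slope_of_hasDerivAt (Set.mem_univ (0:ℝ)) (Set.mem_univ (1:ℝ))
    one_pos hd
  rw [slope_def_field] at hslope
  simp only [one_smul, zero_smul, add_zero, sub_zero, div_one] at hslope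
  have hz : x + (z - x) = z := by abel
  rw [hz] at hslope
  linarith

lemma descent_lemma (g : E → ℝ) (hg : Differentiable ℝ g) {L : ℝ} (hL : 0 < L)
    (hs : ∀ a b : E, ‖gradient g a - gradient g b‖ ≤ L * ‖a - b‖) (x z : E) :
    g z ≤ g x + @inner ℝ _ _ (gradient g x) (z - x) + L / 2 * ‖z - x‖ ^ 2 := by
  set v := z - x with hv
  set ψ' : ℝ → ℝ := fun t => @inner ℝ _ _ (gradient g (x + t • v)) v with hψ'
  have hderiv : ∀ t ∈ Set.uIcc (0:ℝ) 1, HasDerivAt (fun s => g (x + s • v)) (ψ' t) t :=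
    fun t _ => hasDerivAt_line g hg x v t
  have hgradcont : Continuous (gradient g) := by
    have hlip : LipschitzWith (Real.toNNReal L) (gradient g) := by
      apply LipschitzWith.of_dist_le_mul
      intro a b
      simpa [dist_eq_norm, Real.coe_toNNReal L hL.le] using hs a b
    exact hlip.continuous
  have hcont : Continuous ψ' := by
    apply Continuous.inner
    · exact hgradcont.comp (continuous_const.add (continuous_id.smul continuous_const))
    · exact continuous_const
  have hint : IntervalIntegrable ψ' MeasureTheory.volume 0 1 :=
    hcont.intervalIntegrable 0 1
  have hFTC : ∫ t in (0:ℝ)..1, ψ' t = g (x + (1:ℝ) • v) - g (x + (0:ℝ) • v) :=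
    intervalIntegral.integral_eq_sub_of_hasDerivAt hderiv hint
  have hbound : ∀ t ∈ Set.Icc (0:ℝ) 1, ψ' t ≤ ψ' 0 + L * ‖v‖ ^ 2 * t := by
    intro t ht
    have h1 : ψ' t - ψ' 0 ≤ ‖gradient g (x + t • v) - gradient g (x + (0:ℝ) • v)‖ * ‖v‖ := by
      have h := real_inner_le_norm (gradient g (x + t • v) - gradient g (x + (0:ℝ) • v)) v
      rw [inner_sub_left] at h
      simpa [hψ'] using h
    have h2 : ‖gradient g (x + t • v) - gradient g (x + (0:ℝ) • v)‖ ≤ L * (t * ‖v‖) := by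
      have h := hs (x + t • v) (x + (0:ℝ) • v)
      have he : (x + t • v) - (x + (0:ℝ) • v) = t • v := by
        simp
      rw [he, norm_smul] at h
      simpa [abs_of_nonneg ht.1] using h
    nlinarith [norm_nonneg v, ht.1, norm_nonneg (gradient g (x + t • v) - gradient g (x + (0:ℝ) • v))]
  have hmono : ∫ t in (0:ℝ)..1, ψ' t ≤ ∫ t in (0:ℝ)..1, (ψ' 0 + L * ‖v‖ ^ 2 * t) := by
    apply intervalIntegral.integral_mono_on zero_le_one hint
    · exact Continuous.intervalIntegrable (by fun_prop) 0 1
    · exact hbound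
  have hval : ∫ t in (0:ℝ)..1, (ψ' 0 + L * ‖v‖ ^ 2 * t) = ψ' 0 + L * ‖v‖ ^ 2 / 2 := by
    have hii : IntervalIntegrable (fun t : ℝ => L * ‖v‖ ^ 2 * t) MeasureTheory.volume 0 1 :=
      Continuous.intervalIntegrable (by fun_prop) 0 1
    rw [intervalIntegral.integral_add intervalIntegrable_const hii]
    rw [intervalIntegral.integral_const_mul]
    simp [integral_id]
    ring
  have hψ0 : ψ' 0 = @inner ℝ _ _ (gradient g x) v := by simp [hψ']
  have h1v : x + (1:ℝ) • v = z := by rw [hv]; simp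
  have h0v : x + (0:ℝ) • v = x := by simp
  rw [h1v, h0v] at hFTC
  rw [hFTC, hval, hψ0] at hmono
  linarith [hmono]

lemma cocoercive (g : E → ℝ) (hc : ConvexOn ℝ Set.univ g) (hg : Differentiable ℝ g)
    {L : ℝ} (hL : 0 < L) (hs : ∀ a b : E, ‖gradient g a - gradient g b‖ ≤ L * ‖a - b‖)
    (a b : E) :
    ‖gradient g a - gradient g b‖ ^ 2
      ≤ 2 * L * (g a - g b - @inner ℝ _ _ (gradient g b) (a - b)) := by
  set w := gradient g a - gradient g b with hw
  set z := a - L⁻¹ • w with hz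
  have h1 := descent_lemma g hg hL hs a z
  have h2 := convex_lower g hc hg b z
  have hza : z - a = -(L⁻¹ • w) := by rw [hz]; abel
  have hzb : z - b = (a - b) - L⁻¹ • w := by rw [hz]; abel
  have e1 : @inner ℝ _ _ (gradient g a) (z - a) = -(L⁻¹ * @inner ℝ _ _ (gradient g a) w) := by
    rw [hza, inner_neg_right, real_inner_smul_right]
  have e2 : ‖z - a‖ ^ 2 = L⁻¹ ^ 2 * ‖w‖ ^ 2 := by
    rw [hza, norm_neg, norm_smul, Real.norm_eq_abs, abs_of_nonneg (inv_nonneg.mpr hL.le)]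
    ring
  have e3 : @inner ℝ _ _ (gradient g b) (z - b)
      = @inner ℝ _ _ (gradient g b) (a - b) - L⁻¹ * @inner ℝ _ _ (gradient g b) w := by
    rw [hzb, inner_sub_right, real_inner_smul_right]
  have e4 : @inner ℝ _ _ (gradient g a) w - @inner ℝ _ _ (gradient g b) w = ‖w‖ ^ 2 := by
    rw [← inner_sub_left, ← hw, real_inner_self_eq_norm_sq]
  rw [e1, e2] at h1
  rw [e3] at h2
  have hL' : L ≠ 0 := ne_of_gt hL
  have h6 : L⁻¹ * @inner ℝ _ _ (gradient g a) w - L⁻¹ * @inner ℝ _ _ (gradient g b) w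
      = L⁻¹ * ‖w‖ ^ 2 := by rw [← mul_sub, e4]
  have key : (2 * L)⁻¹ * ‖w‖ ^ 2 ≤ g a - g b - @inner ℝ _ _ (gradient g b) (a - b) := by
    have h7 : L⁻¹ * ‖w‖ ^ 2 - L / 2 * (L⁻¹ ^ 2 * ‖w‖ ^ 2) = (2 * L)⁻¹ * ‖w‖ ^ 2 := by
      field_simp
      ring
    linarith
  have hmul := mul_le_mul_of_nonneg_left key (by positivity : (0:ℝ) ≤ 2 * L)
  have h8 : 2 * L * ((2 * L)⁻¹ * ‖w‖ ^ 2) = ‖w‖ ^ 2 := by field_simp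
  linarith

set_option maxHeartbeats 1000000

theorem stmt_17 (n d : ℕ) (hn : 1 ≤ n) (hd : 1 ≤ d) (L : ℝ) (hL : 0 < L)
    (f : Fin n → EuclideanSpace ℝ (Fin d) → ℝ)
    (hconv : ∀ i, ConvexOn ℝ Set.univ (f i))
    (hdiff : ∀ i, Differentiable ℝ (f i))
    (hsmooth : ∀ i x y, ‖gradient (f i) x - gradient (f i) y‖ ≤ L * ‖x - y‖)
    (F : EuclideanSpace ℝ (Fin d) → ℝ)
    (hF : F = fun x => (n : ℝ)⁻¹ * ∑ i, f i x)
    (xstar : EuclideanSpace ℝ (Fin d)) (hmin : ∀ z, F xstar ≤ F z)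
    (x : EuclideanSpace ℝ (Fin d)) (ytil : EuclideanSpace ℝ (Fin d))
    (gbar : EuclideanSpace ℝ (Fin d))
    (hgbar : gbar = (n : ℝ)⁻¹ • ∑ j, gradient (f j) ytil) :
    (n : ℝ)⁻¹ * ∑ i, ‖gradient (f i) x - gradient (f i) ytil + gbar‖ ^ 2
      ≤ 8 * L * (F x - F xstar)
        + 4 * L * (∑ i, bregDiv (f i) ytil xstar
            - ((n : ℝ)⁻¹ * ∑ i, bregDiv (f i) x xstar
                + (((n : ℝ) - 1) / n) * ∑ i, bregDiv (f i) ytil xstar)) := by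
  have hn0 : (n : ℝ) ≠ 0 := Nat.cast_ne_zero.mpr (by omega)
  have hnpos : (0 : ℝ) < n := by
    have : (0:ℕ) < n := hn
    exact_mod_cast this
  -- the sum of gradients at the minimizer vanishes
  have hfd : ∀ (i : Fin n) (y : EuclideanSpace ℝ (Fin d)), HasFDerivAt (f i)
      ((InnerProductSpace.toDual ℝ _) (gradient (f i) y)) y :=
    fun i y => ((hdiff i y).hasGradientAt).hasFDerivAt
  have hFder : HasFDerivAt F
      ((n : ℝ)⁻¹ • ∑ i, (InnerProductSpace.toDual ℝ _) (gradient (f i) xstar)) xstar := by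
    rw [hF]
    exact (HasFDerivAt.fun_sum (fun i _ => hfd i xstar)).const_mul _
  have hmin' : IsLocalMin F xstar := Filter.Eventually.of_forall hmin
  have hfz : fderiv ℝ F xstar = 0 := hmin'.fderiv_eq_zero
  have S0 : ∑ i, gradient (f i) xstar = 0 := by
    have h0 : ((n : ℝ)⁻¹ • ∑ i, (InnerProductSpace.toDual ℝ _) (gradient (f i) xstar)) = 0 := by
      rw [← hFder.fderiv]; exact hfz
    have h1 : (InnerProductSpace.toDual ℝ _)
        ((n : ℝ)⁻¹ • ∑ i, gradient (f i) xstar) = 0 := by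
      rw [map_smul, map_sum]; exact_mod_cast h0
    have h2 : ((n : ℝ)⁻¹ • ∑ i, gradient (f i) xstar) = 0 := by
      have := congrArg (InnerProductSpace.toDual ℝ _).symm h1
      simpa only [LinearIsometryEquiv.symm_apply_apply, map_zero] using this
    rcases smul_eq_zero.mp h2 with h | h
    · exact absurd h (inv_ne_zero hn0)
    · exact h
  -- sum of (∇f_i ytil − ∇f_i xstar) equals n • gbar
  have hsumb : ∑ i, (gradient (f i) ytil - gradient (f i) xstar) = (n : ℝ) • gbar := by
    rw [hgbar, smul_smul, mul_inv_cancel₀ hn0, one_smul, Finset.sum_sub_distrib, S0, sub_zero]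
  -- pointwise bound
  have hpt : ∀ i, ‖gradient (f i) x - gradient (f i) ytil + gbar‖ ^ 2
      ≤ 2 * ‖gradient (f i) x - gradient (f i) xstar‖ ^ 2
        + 2 * ‖(gradient (f i) ytil - gradient (f i) xstar) - gbar‖ ^ 2 := by
    intro i
    have he : gradient (f i) x - gradient (f i) ytil + gbar
        = (gradient (f i) x - gradient (f i) xstar)
          - ((gradient (f i) ytil - gradient (f i) xstar) - gbar) := by abel
    rw [he]
    have h1 := norm_sub_le (gradient (f i) x - gradient (f i) xstar)
      ((gradient (f i) ytil - gradient (f i) xstar) - gbar)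
    have h2 := mul_self_le_mul_self (norm_nonneg ((gradient (f i) x - gradient (f i) xstar)
        - ((gradient (f i) ytil - gradient (f i) xstar) - gbar))) h1
    nlinarith [h2, sq_nonneg (‖gradient (f i) x - gradient (f i) xstar‖
      - ‖(gradient (f i) ytil - gradient (f i) xstar) - gbar‖)]
  -- variance bound
  have hvar : ∑ i, ‖(gradient (f i) ytil - gradient (f i) xstar) - gbar‖ ^ 2
      ≤ ∑ i, ‖gradient (f i) ytil - gradient (f i) xstar‖ ^ 2 := by
    have hinner : ∑ i, @inner ℝ _ _ (gradient (f i) ytil - gradient (f i) xstar) gbar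
        = (n : ℝ) * ‖gbar‖ ^ 2 := by
      rw [← sum_inner, hsumb, real_inner_smul_left, real_inner_self_eq_norm_sq]
    have hexp : ∑ i, ‖(gradient (f i) ytil - gradient (f i) xstar) - gbar‖ ^ 2
        = ∑ i, ‖gradient (f i) ytil - gradient (f i) xstar‖ ^ 2 - (n : ℝ) * ‖gbar‖ ^ 2 := by
      have h1 : ∀ i : Fin n, ‖(gradient (f i) ytil - gradient (f i) xstar) - gbar‖ ^ 2
          = ‖gradient (f i) ytil - gradient (f i) xstar‖ ^ 2
            - 2 * @inner ℝ _ _ (gradient (f i) ytil - gradient (f i) xstar) gbar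
            + ‖gbar‖ ^ 2 := fun i => norm_sub_sq_real _ _
      rw [Finset.sum_congr rfl (fun i _ => h1 i), Finset.sum_add_distrib,
        Finset.sum_sub_distrib, ← Finset.mul_sum, hinner, Finset.sum_const,
        Finset.card_univ, Fintype.card_fin, nsmul_eq_mul]
      ring
    rw [hexp]
    nlinarith [sq_nonneg ‖gbar‖, hnpos]
  -- cocoercivity
  have hcx : ∀ i : Fin n, ‖gradient (f i) x - gradient (f i) xstar‖ ^ 2
      ≤ 2 * L * bregDiv (f i) x xstar := by
    intro i
    have h := cocoercive (f i) (hconv i) (hdiff i) hL (hsmooth i) x xstar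
    unfold bregDiv
    exact h
  have hcy : ∀ i : Fin n, ‖gradient (f i) ytil - gradient (f i) xstar‖ ^ 2
      ≤ 2 * L * bregDiv (f i) ytil xstar := by
    intro i
    have h := cocoercive (f i) (hconv i) (hdiff i) hL (hsmooth i) ytil xstar
    unfold bregDiv
    exact h
  -- total bound
  have htot : ∑ i, ‖gradient (f i) x - gradient (f i) ytil + gbar‖ ^ 2
      ≤ 4 * L * ∑ i, bregDiv (f i) x xstar + 4 * L * ∑ i, bregDiv (f i) ytil xstar := by
    have s1 : ∑ i, ‖gradient (f i) x - gradient (f i) ytil + gbar‖ ^ 2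
        ≤ ∑ i, (2 * ‖gradient (f i) x - gradient (f i) xstar‖ ^ 2
          + 2 * ‖(gradient (f i) ytil - gradient (f i) xstar) - gbar‖ ^ 2) :=
      Finset.sum_le_sum (fun i _ => hpt i)
    rw [Finset.sum_add_distrib, ← Finset.mul_sum, ← Finset.mul_sum] at s1
    have s2 : ∑ i, ‖gradient (f i) x - gradient (f i) xstar‖ ^ 2
        ≤ 2 * L * ∑ i, bregDiv (f i) x xstar := by
      rw [Finset.mul_sum]; exact Finset.sum_le_sum (fun i _ => hcx i)
    have s3 : ∑ i, ‖gradient (f i) ytil - gradient (f i) xstar‖ ^ 2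
        ≤ 2 * L * ∑ i, bregDiv (f i) ytil xstar := by
      rw [Finset.mul_sum]; exact Finset.sum_le_sum (fun i _ => hcy i)
    linarith
  -- F x − F xstar in terms of Bregman divergences
  have hDx : F x - F xstar = (n : ℝ)⁻¹ * ∑ i, bregDiv (f i) x xstar := by
    have h1 : ∑ i, bregDiv (f i) x xstar = ∑ i, f i x - ∑ i, f i xstar := by
      unfold bregDiv
      rw [Finset.sum_sub_distrib, Finset.sum_sub_distrib, ← sum_inner, S0,
        inner_zero_left, sub_zero]
    rw [hF, h1]
    ring
  rw [hDx]
  have hnn : (0 : ℝ) ≤ (n : ℝ)⁻¹ := by positivity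
  calc (n : ℝ)⁻¹ * ∑ i, ‖gradient (f i) x - gradient (f i) ytil + gbar‖ ^ 2
      ≤ (n : ℝ)⁻¹ * (4 * L * ∑ i, bregDiv (f i) x xstar
          + 4 * L * ∑ i, bregDiv (f i) ytil xstar) := mul_le_mul_of_nonneg_left htot hnn
    _ = 8 * L * ((n : ℝ)⁻¹ * ∑ i, bregDiv (f i) x xstar)
        + 4 * L * (∑ i, bregDiv (f i) ytil xstar
            - ((n : ℝ)⁻¹ * ∑ i, bregDiv (f i) x xstar
                + (((n : ℝ) - 1) / n) * ∑ i, bregDiv (f i) ytil xstar)) := by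
      field_simp
      ring
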